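/- Let G be a group, N a normal subgroup of G such that the quotient G/N is finite cyclic, and let τ ∈ G be an element whose image generates G/N; let d be the least positive integer with τ^d ∈ N. Let H be a group and r : N → H a group homomorphism. Then r extends to a group homomorphism R : G → H (i.e., R(σ) = r(σ) for all σ ∈ N) if and only if there exists g ∈ H such that r(τστ⁻¹) = g · r(σ) · g⁻¹ for all σ ∈ N, and r(τ^d) = g^d. Moreover, in that case the extension R can be chosen with R(τ) = g. -/

import Mathlib

section Aux

variable {G H : Type*} [Group G] [Group H]

private lemma ext_aux
    (N : Subgroup G) (hN : N.Normal) (τ : G)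
    (hgen : ∀ g : G, ∃ n : ℤ, (τ ^ n)⁻¹ * g ∈ N)
    (d : ℕ) (hd : 0 < d) (hτd : τ ^ d ∈ N)
    (hmin : ∀ k : ℕ, 0 < k → τ ^ k ∈ N → d ≤ k)
    (r : N →* H) (g : H)
    (h1 : ∀ σ : N, r ⟨τ * σ * τ⁻¹, hN.conj_mem σ.1 σ.2 τ⟩ = g * r σ * g⁻¹)
    (h2 : r ⟨τ ^ d, hτd⟩ = g ^ d) :
    ∃ R : G →* H, (∀ σ : N, R σ = r σ) ∧ R τ = g := by
  -- congruence helper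
  have rcongr : ∀ {a b : G} (ha : a ∈ N) (hb : b ∈ N), a = b → r ⟨a, ha⟩ = r ⟨b, hb⟩ := by
    rintro a b ha hb rfl; rfl
  -- multiplicativity helper
  have rmul : ∀ (a b : G) (ha : a ∈ N) (hb : b ∈ N),
      r ⟨a * b, mul_mem ha hb⟩ = r ⟨a, ha⟩ * r ⟨b, hb⟩ := by
    intro a b ha hb
    exact map_mul r ⟨a, ha⟩ ⟨b, hb⟩
  -- conjugation by τ⁻¹
  have h1' : ∀ σ : N, r ⟨τ⁻¹ * σ * τ, by
      simpa using hN.conj_mem σ.1 σ.2 τ⁻¹⟩ = g⁻¹ * r σ * g := by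
    intro σ
    have hmem : τ⁻¹ * σ * τ ∈ N := by simpa using hN.conj_mem σ.1 σ.2 τ⁻¹
    have key := h1 ⟨τ⁻¹ * σ * τ, hmem⟩
    have heq : r ⟨τ * (τ⁻¹ * σ * τ) * τ⁻¹, hN.conj_mem _ hmem τ⟩ = r σ := by
      apply rcongr; group
    rw [heq] at key
    rw [key]; group
  -- conjugation by τ^n for all n : ℤ
  have hconj : ∀ (n : ℤ) (σ : N),
      r ⟨τ ^ n * σ * (τ ^ n)⁻¹, hN.conj_mem σ.1 σ.2 (τ ^ n)⟩ = g ^ n * r σ * (g ^ n)⁻¹ := by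
    intro n
    induction n using Int.induction_on with
    | zero => intro σ; simp
    | succ k ih =>
      intro σ
      have hmem : τ ^ (k : ℤ) * σ * (τ ^ (k : ℤ))⁻¹ ∈ N := hN.conj_mem σ.1 σ.2 _
      have heq : r ⟨τ ^ ((k : ℤ) + 1) * σ * (τ ^ ((k : ℤ) + 1))⁻¹,
          hN.conj_mem σ.1 σ.2 _⟩ =
          r ⟨τ * (τ ^ (k : ℤ) * σ * (τ ^ (k : ℤ))⁻¹) * τ⁻¹, hN.conj_mem _ hmem τ⟩ := by
        apply rcongr
        rw [zpow_add_one]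
        group
      rw [heq, h1 ⟨_, hmem⟩, ih σ]
      rw [zpow_add_one]
      group
    | pred k ih =>
      intro σ
      have hmem : τ ^ (-(k : ℤ)) * σ * (τ ^ (-(k : ℤ)))⁻¹ ∈ N := hN.conj_mem σ.1 σ.2 _
      have heq : r ⟨τ ^ (-(k : ℤ) - 1) * σ * (τ ^ (-(k : ℤ) - 1))⁻¹,
          hN.conj_mem σ.1 σ.2 _⟩ =
          r ⟨τ⁻¹ * (τ ^ (-(k : ℤ)) * σ * (τ ^ (-(k : ℤ)))⁻¹) * τ, by
            simpa using hN.conj_mem _ hmem τ⁻¹⟩ := by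
        apply rcongr
        rw [zpow_sub_one]
        group
      rw [heq, h1' ⟨_, hmem⟩, ih σ]
      rw [zpow_sub_one]
      group
  -- τ^k ∈ N implies d ∣ k
  have hdvd : ∀ k : ℤ, τ ^ k ∈ N → (d : ℤ) ∣ k := by
    intro k hk
    have hd' : (0 : ℤ) < (d : ℤ) := by exact_mod_cast hd
    set s : ℤ := k % (d : ℤ) with hs
    have hs0 : 0 ≤ s := Int.emod_nonneg k (by positivity)
    have hsd : s < (d : ℤ) := Int.emod_lt_of_pos k hd'
    have hks : k = (d : ℤ) * (k / d) + s := (Int.mul_ediv_add_emod k d).symm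
    have hmem : τ ^ s ∈ N := by
      have : τ ^ s = τ ^ k * ((τ ^ d) ^ (k / (d : ℤ)))⁻¹ := by
        rw [← zpow_natCast τ d, ← zpow_mul]
        rw [← zpow_neg, ← zpow_add]
        congr 1
        omega
      rw [this]
      exact mul_mem hk (inv_mem (zpow_mem hτd _))
    rcases eq_or_lt_of_le hs0 with h0 | hpos
    · exact Int.dvd_of_emod_eq_zero h0.symm
    · exfalso
      have hnat : τ ^ s.toNat ∈ N := by
        rwa [← zpow_natCast, Int.toNat_of_nonneg hs0]
      have := hmin s.toNat (by omega) hnat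
      omega
  -- r of τ^k equals g^k whenever τ^k ∈ N
  have hpow : ∀ (k : ℤ) (hk : τ ^ k ∈ N), r ⟨τ ^ k, hk⟩ = g ^ k := by
    intro k hk
    obtain ⟨q, hq⟩ := hdvd k hk
    have hcoe : τ ^ k = (((⟨τ ^ d, hτd⟩ : N) ^ q : N) : G) := by
      push_cast
      rw [← zpow_natCast τ d, ← zpow_mul, ← hq]
    have : r ⟨τ ^ k, hk⟩ = r ((⟨τ ^ d, hτd⟩ : N) ^ q) := by
      congr 1
      exact Subtype.ext hcoe
    rw [this, map_zpow, h2, ← zpow_natCast g d, ← zpow_mul, ← hq]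
  -- choice of exponent for each element
  set n : G → ℤ := fun x => (hgen x).choose with hn_def
  have hn : ∀ x : G, (τ ^ n x)⁻¹ * x ∈ N := fun x => (hgen x).choose_spec
  -- the extension as raw function
  set F : G → H := fun x => g ^ n x * r ⟨(τ ^ n x)⁻¹ * x, hn x⟩ with hF_def
  -- alternative formula: F x = g ^ m * r ⟨(τ^m)⁻¹ * x, _⟩ for ANY valid m
  have hFany : ∀ (x : G) (m : ℤ) (hm : (τ ^ m)⁻¹ * x ∈ N),
      F x = g ^ m * r ⟨(τ ^ m)⁻¹ * x, hm⟩ := by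
    intro x m hm
    have hmem : τ ^ (m - n x) ∈ N := by
      have he : τ ^ (m - n x) = ((τ ^ n x)⁻¹ * x) * ((τ ^ m)⁻¹ * x)⁻¹ := by
        rw [zpow_sub]; group
      rw [he]
      exact mul_mem (hn x) (inv_mem hm)
    have hsplit : r ⟨(τ ^ n x)⁻¹ * x, hn x⟩ =
        r ⟨τ ^ (m - n x), hmem⟩ * r ⟨(τ ^ m)⁻¹ * x, hm⟩ := by
      rw [← rmul]
      apply rcongr
      rw [zpow_sub]; group
    rw [hF_def]
    simp only
    rw [hsplit, hpow (m - n x) hmem, zpow_sub]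
    group
  -- F is multiplicative
  have hFmul : ∀ x y : G, F (x * y) = F x * F y := by
    intro x y
    have ha := hn x
    have hb := hn y
    -- conjugate of a by τ^(-(n y))
    have hconjmem : (τ ^ n y)⁻¹ * ((τ ^ n x)⁻¹ * x) * τ ^ n y ∈ N := by
      have := hN.conj_mem _ ha (τ ^ n y)⁻¹
      simpa using this
    have hxy : (τ ^ (n x + n y))⁻¹ * (x * y) ∈ N := by
      have he : (τ ^ (n x + n y))⁻¹ * (x * y) =
          ((τ ^ n y)⁻¹ * ((τ ^ n x)⁻¹ * x) * τ ^ n y) * ((τ ^ n y)⁻¹ * y) := by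
        rw [zpow_add]; group
      rw [he]
      exact mul_mem hconjmem hb
    rw [hFany (x * y) (n x + n y) hxy]
    have hsplit : r ⟨(τ ^ (n x + n y))⁻¹ * (x * y), hxy⟩ =
        r ⟨(τ ^ n y)⁻¹ * ((τ ^ n x)⁻¹ * x) * τ ^ n y, hconjmem⟩ *
          r ⟨(τ ^ n y)⁻¹ * y, hb⟩ := by
      rw [← rmul]
      apply rcongr
      rw [zpow_add]; group
    have hcj : r ⟨(τ ^ n y)⁻¹ * ((τ ^ n x)⁻¹ * x) * τ ^ n y, hconjmem⟩ =
        g ^ (-(n y)) * r ⟨(τ ^ n x)⁻¹ * x, ha⟩ * (g ^ (-(n y)))⁻¹ := by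
      have := hconj (-(n y)) ⟨(τ ^ n x)⁻¹ * x, ha⟩
      rw [← this]
      apply rcongr
      rw [zpow_neg]
      simp
    rw [hsplit, hcj, hF_def]
    simp only
    rw [zpow_add, zpow_neg]
    group
  refine ⟨MonoidHom.mk' F hFmul, ?_, ?_⟩
  · intro σ
    have h0 : (τ ^ (0 : ℤ))⁻¹ * (σ : G) ∈ N := by simpa using σ.2
    have hv := hFany σ 0 h0
    show F σ = r σ
    rw [hv, zpow_zero, one_mul]
    have : r ⟨(τ ^ (0 : ℤ))⁻¹ * σ, h0⟩ = r ⟨(σ : G), σ.2⟩ := by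
      apply rcongr; simp
    rw [this]
  · have h1m : (τ ^ (1 : ℤ))⁻¹ * τ ∈ N := by simpa using one_mem N
    have hv := hFany τ 1 h1m
    show F τ = g
    rw [hv, zpow_one]
    have : r ⟨(τ ^ (1 : ℤ))⁻¹ * τ, h1m⟩ = 1 := by
      have he : r ⟨(τ ^ (1 : ℤ))⁻¹ * τ, h1m⟩ = r 1 := by
        apply rcongr; simp
      rw [he, map_one]
    rw [this, mul_one]

end Aux

/-- let `N ⊴ G` with `G/N` finite cyclic generated by the image of `τ`,
and let `d` be the least positive integer with `τ^d ∈ N`.  A homomorphism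
`r : N →* H` extends to `G` iff there is `g ∈ H` with
`r (τστ⁻¹) = g * r σ * g⁻¹` for all `σ ∈ N` and `r (τ^d) = g^d`;
moreover the extension can then be chosen with `R τ = g`. -/
theorem extension_criterion_cyclic
    {G H : Type*} [Group G] [Group H]
    (N : Subgroup G) (hN : N.Normal) (τ : G)
    (hgen : ∀ g : G, ∃ n : ℤ, (τ ^ n)⁻¹ * g ∈ N)
    (d : ℕ) (hd : 0 < d) (hτd : τ ^ d ∈ N)
    (hmin : ∀ k : ℕ, 0 < k → τ ^ k ∈ N → d ≤ k)
    (r : N →* H) :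
    ((∃ R : G →* H, ∀ σ : N, R σ = r σ) ↔
      (∃ g : H,
        (∀ σ : N, r ⟨τ * σ * τ⁻¹, hN.conj_mem σ.1 σ.2 τ⟩ = g * r σ * g⁻¹) ∧
        r ⟨τ ^ d, hτd⟩ = g ^ d)) ∧
    (∀ g : H,
      (∀ σ : N, r ⟨τ * σ * τ⁻¹, hN.conj_mem σ.1 σ.2 τ⟩ = g * r σ * g⁻¹) →
      r ⟨τ ^ d, hτd⟩ = g ^ d →
      ∃ R : G →* H, (∀ σ : N, R σ = r σ) ∧ R τ = g) := by
  have key := ext_aux N hN τ hgen d hd hτd hmin r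
  constructor
  · constructor
    · rintro ⟨R, hR⟩
      refine ⟨R τ, fun σ => ?_, ?_⟩
      · have := hR ⟨τ * σ * τ⁻¹, hN.conj_mem σ.1 σ.2 τ⟩
        rw [← this]
        push_cast
        rw [map_mul, map_mul, map_inv, hR σ]
      · have := hR ⟨τ ^ d, hτd⟩
        rw [← this]
        push_cast
        rw [map_pow]
    · rintro ⟨g, h1, h2⟩
      obtain ⟨R, hR, -⟩ := key g h1 h2
      exact ⟨R, hR⟩
  · exact key
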